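/- arXiv:1603.09285 — 2 statements merged into one kernel-verified Lean document; each statement's English description precedes it below -/
import Mathlib

section
/- Let r > 0 and ε > 0. For a point z = x + iy in the hyperbolic upper half-plane ℍ, the focus/directrix condition sinh(dist z i) = ε·sinh(Metric.infDist z ℓ_r) holds if and only if r²·(1 + x⁴ + y⁴ + 2y²(ε² − 1) + 2x²(1 + y² + ε²)) = ε²·(r⁴ + (x² + y²)²). -/
set_option maxHeartbeats 1000000

open UpperHalfPlane

/-- The geodesic `ℓ_R = {u ∈ ℍ : |u| = R}` in the upper half-plane. -/
noncomputable def ell (R : ℝ) : Set ℍ := {u : ℍ | ‖(u : ℂ)‖ = R}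

/-- The point `t·i` of the upper half-plane, for `t > 0`. -/
noncomputable def vpt (t : ℝ) (ht : 0 < t) : ℍ :=
  UpperHalfPlane.mk (t * Complex.I) (by simpa using ht)

lemma mem_ell_iff (R : ℝ) (hR : 0 < R) (u : ℍ) :
    u ∈ ell R ↔ u.re ^ 2 + u.im ^ 2 = R ^ 2 := by
  rw [ell, Set.mem_setOf_eq, ← sq_eq_sq₀ (norm_nonneg _) hR.le, Complex.sq_norm,
    Complex.normSq_apply, UpperHalfPlane.coe_re, UpperHalfPlane.coe_im, ← sq, ← sq]

lemma infDist_ell (r : ℝ) (hr : 0 < r) (z : ℍ) :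
    Metric.infDist z (ell r) =
      Real.arsinh (|z.re ^ 2 + z.im ^ 2 - r ^ 2| / (2 * r * z.im)) := by
  set x := z.re with hx
  set y := z.im with hy
  have hy0 : 0 < y := z.im_pos
  set A : ℝ := x ^ 2 + y ^ 2 + r ^ 2 with hA
  have hA0 : 0 < A := by positivity
  have hK2nn : 0 ≤ A ^ 2 - 4 * r ^ 2 * x ^ 2 := by
    nlinarith [sq_nonneg (x ^ 2 + y ^ 2 - r ^ 2), sq_nonneg (r * y)]
  set K : ℝ := Real.sqrt (A ^ 2 - 4 * r ^ 2 * x ^ 2) with hK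
  have hK2 : K ^ 2 = A ^ 2 - 4 * r ^ 2 * x ^ 2 := Real.sq_sqrt hK2nn
  have hKpos : 0 < K := by
    apply Real.sqrt_pos.2
    nlinarith [sq_nonneg (x ^ 2 + y ^ 2 - r ^ 2), sq_nonneg (r * y), mul_pos hr hy0]
  set s : ℝ := |x ^ 2 + y ^ 2 - r ^ 2| / (2 * r * y) with hs
  have hs0 : 0 ≤ s := by positivity
  set d0 : ℝ := Real.arsinh s with hd0
  have hd00 : 0 ≤ d0 := Real.arsinh_nonneg_iff.2 hs0
  have hcosh0 : Real.cosh d0 = K / (2 * r * y) := by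
    rw [hd0, Real.cosh_arsinh]
    have h1 : 1 + s ^ 2 = (K / (2 * r * y)) ^ 2 := by
      rw [hs, div_pow, div_pow, sq_abs, hK2]
      field_simp
      ring
    rw [h1, Real.sqrt_sq (by positivity)]
  have him : (0:ℝ) < r * K / A := by positivity
  set u0 : ℍ := UpperHalfPlane.mk ⟨2 * r ^ 2 * x / A, r * K / A⟩ him with hu0
  have hu0re : u0.re = 2 * r ^ 2 * x / A := rfl
  have hu0im : u0.im = r * K / A := rfl
  have hu0mem : u0 ∈ ell r := by
    rw [mem_ell_iff r hr, hu0re, hu0im]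
    rw [div_pow, div_pow, ← add_div, div_eq_iff (by positivity)]
    linear_combination r ^ 2 * hK2
  have hcoshu0 : Real.cosh (dist z u0) = K / (2 * r * y) := by
    rw [UpperHalfPlane.cosh_dist', hu0re, hu0im, ← hx, ← hy]
    rw [div_eq_div_iff (by positivity) (by positivity)]
    field_simp
    simp only [hK2, hA]
    ring
  have hdistu0 : dist z u0 = d0 := by
    have h1 : |dist z u0| ≤ |d0| := Real.cosh_le_cosh.1 (by rw [hcoshu0, hcosh0])
    have h2 : |d0| ≤ |dist z u0| := Real.cosh_le_cosh.1 (by rw [hcoshu0, hcosh0])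
    rw [abs_of_nonneg dist_nonneg, abs_of_nonneg hd00] at h1 h2
    exact le_antisymm h1 h2
  refine le_antisymm (hdistu0 ▸ Metric.infDist_le_dist_of_mem hu0mem) ?_
  by_contra hlt
  push_neg at hlt
  obtain ⟨u, hu, hud⟩ := (Metric.infDist_lt_iff ⟨u0, hu0mem⟩).1 hlt
  have hbu : 0 < u.im := u.im_pos
  have hab : u.re ^ 2 + u.im ^ 2 = r ^ 2 := (mem_ell_iff r hr u).1 hu
  have hcoshu : Real.cosh (dist z u) = ((x - u.re) ^ 2 + y ^ 2 + u.im ^ 2) / (2 * y * u.im) :=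
    UpperHalfPlane.cosh_dist' z u
  have habM : A - 2 * u.re * x = (x - u.re) ^ 2 + y ^ 2 + u.im ^ 2 := by
    linear_combination (-1 : ℝ) * hab
  have hAa : 0 ≤ A - 2 * u.re * x := by rw [habM]; positivity
  have hKb : K * u.im ≤ r * (A - 2 * u.re * x) := by
    have key : (r * (A - 2 * u.re * x)) ^ 2 - (K * u.im) ^ 2
        = (A * u.re - 2 * r ^ 2 * x) ^ 2 := by
      linear_combination (-(u.im ^ 2)) * hK2 + (-(A ^ 2 - 4 * r ^ 2 * x ^ 2)) * hab
    have hsq : (K * u.im) ^ 2 ≤ (r * (A - 2 * u.re * x)) ^ 2 := by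
      nlinarith [key, sq_nonneg (A * u.re - 2 * r ^ 2 * x)]
    calc K * u.im = Real.sqrt ((K * u.im) ^ 2) := (Real.sqrt_sq (by positivity)).symm
      _ ≤ Real.sqrt ((r * (A - 2 * u.re * x)) ^ 2) := Real.sqrt_le_sqrt hsq
      _ = r * (A - 2 * u.re * x) := Real.sqrt_sq (by positivity)
  have hcle : Real.cosh d0 ≤ Real.cosh (dist z u) := by
    rw [hcosh0, hcoshu, div_le_div_iff₀ (by positivity) (by positivity)]
    rw [habM] at hKb
    have h2y := mul_le_mul_of_nonneg_left hKb (by positivity : (0:ℝ) ≤ 2 * y)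
    linarith [h2y]
  have hfin : d0 ≤ dist z u := by
    have h := Real.cosh_le_cosh.1 hcle
    rwa [abs_of_nonneg hd00, abs_of_nonneg dist_nonneg] at h
  linarith


/-- Algebraic form of the focus/directrix condition
`sinh(dist z i) = ε·sinh(d(z, ℓ_r))`. -/
theorem stmt8 (r ε : ℝ) (hr : 0 < r) (hε : 0 < ε) (z : ℍ) (x y : ℝ)
    (hx : x = z.re) (hy : y = z.im) :
    Real.sinh (dist z UpperHalfPlane.I) = ε * Real.sinh (Metric.infDist z (ell r)) ↔
      r ^ 2 * (1 + x ^ 4 + y ^ 4 + 2 * y ^ 2 * (ε ^ 2 - 1) + 2 * x ^ 2 * (1 + y ^ 2 + ε ^ 2)) =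
        ε ^ 2 * (r ^ 4 + (x ^ 2 + y ^ 2) ^ 2) := by
  subst hx hy
  set x := z.re
  set y := z.im
  have hy0 : 0 < y := z.im_pos
  rw [infDist_ell r hr z, Real.sinh_arsinh]
  have hL0 : 0 ≤ Real.sinh (dist z UpperHalfPlane.I) :=
    Real.sinh_nonneg_iff.2 dist_nonneg
  have hR0 : (0:ℝ) ≤ ε * (|x ^ 2 + y ^ 2 - r ^ 2| / (2 * r * y)) := by positivity
  have hcosh : Real.cosh (dist z UpperHalfPlane.I)
      = ((x - 0) ^ 2 + y ^ 2 + 1 ^ 2) / (2 * y * 1) := by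
    have h := UpperHalfPlane.cosh_dist' z UpperHalfPlane.I
    rwa [UpperHalfPlane.I_re, UpperHalfPlane.I_im] at h
  have hL2 : Real.sinh (dist z UpperHalfPlane.I) ^ 2 =
      ((x ^ 2 + (y - 1) ^ 2) * (x ^ 2 + (y + 1) ^ 2)) / (4 * y ^ 2) := by
    have h := Real.cosh_sq (dist z UpperHalfPlane.I)
    have h2 : Real.sinh (dist z UpperHalfPlane.I) ^ 2 =
        Real.cosh (dist z UpperHalfPlane.I) ^ 2 - 1 := by linarith
    rw [h2, hcosh]
    field_simp
    ring
  rw [← sq_eq_sq₀ hL0 hR0, hL2, mul_pow, div_pow, sq_abs, ← mul_div_assoc,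
    div_eq_div_iff (by positivity) (by positivity)]
  constructor
  · intro h
    have h1 : (4 * y ^ 2) *
        (r ^ 2 * (1 + x ^ 4 + y ^ 4 + 2 * y ^ 2 * (ε ^ 2 - 1) + 2 * x ^ 2 * (1 + y ^ 2 + ε ^ 2)))
        = (4 * y ^ 2) * (ε ^ 2 * (r ^ 4 + (x ^ 2 + y ^ 2) ^ 2)) := by linear_combination h
    exact mul_left_cancel₀ (by positivity : (0:ℝ) < 4 * y ^ 2).ne' h1
  · intro h
    linear_combination (4 * y ^ 2) * h
end

section
/- The two-focus ellipse with foci i and 2i and distance-sum log(5/2) coincides with a focus/directrix ellipse: {z ∈ ℍ : dist z i + dist z (2i) = log(5/2)} = {z ∈ ℍ : sinh(dist z i) = (√209/21)·sinh(Metric.infDist z ℓ_{√(11/19)})}, and both sets equal the algebraic curve {z = x + iy ∈ ℍ : 20x⁴ + 40x²y² + 325x² + 20y⁴ − 116y² + 80 = 0}. -/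
open UpperHalfPlane Complex

lemma sinh_dist_eq (z w : ℍ) : Real.sinh (dist z w) =
    ‖(z:ℂ) - w‖ * ‖(z:ℂ) - (starRingEnd ℂ) w‖ / (2 * z.im * w.im) := by
  have h : dist z w = 2 * (dist z w / 2) := by ring
  rw [h, Real.sinh_two_mul, UpperHalfPlane.sinh_half_dist, UpperHalfPlane.cosh_half_dist,
    Complex.dist_eq, Complex.dist_eq]
  have hm : Real.sqrt (z.im * w.im) * Real.sqrt (z.im * w.im) = z.im * w.im :=
    Real.mul_self_sqrt (by positivity)
  have hm0 : Real.sqrt (z.im * w.im) ≠ 0 := by positivity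
  field_simp
  ring_nf
  rw [Real.sq_sqrt (mul_pos z.im_pos w.im_pos).le]
  ring

lemma le_infDist' {x : ℍ} {s : Set ℍ} (hs : s.Nonempty) {b : ℝ}
    (h : ∀ y ∈ s, b ≤ dist x y) : b ≤ Metric.infDist x s := by
  by_contra hb
  push_neg at hb
  obtain ⟨y, hy, hlt⟩ := (Metric.infDist_lt_iff hs).1 hb
  exact absurd (h y hy) (not_le.2 hlt)

lemma half_dist_eq_sqrt (z w : ℍ) :
    dist (z:ℂ) w / (2 * Real.sqrt (z.im * w.im)) =
      Real.sqrt (Complex.normSq ((z:ℂ) - w) / (4 * (z.im * w.im))) := by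
  rw [Complex.dist_eq, Complex.norm_def, Real.sqrt_div (normSq_nonneg _),
    show (4:ℝ)*(z.im*w.im) = 2^2*(z.im*w.im) by ring, Real.sqrt_mul (by norm_num : (0:ℝ) ≤ 2^2),
    Real.sqrt_sq (by norm_num : (0:ℝ) ≤ 2)]


set_option maxHeartbeats 2000000 in
lemma sinh_infDist_ell {R : ℝ} (hR : 0 < R) (z : ℍ) :
    Real.sinh (Metric.infDist z (ell R)) =
      |‖(z:ℂ)‖ ^ 2 - R ^ 2| / (2 * R * z.im) := by
  have hY : 0 < z.im := z.im_pos
  have hzabs : ‖(z:ℂ)‖^2 = z.re^2 + z.im^2 := by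
    rw [Complex.sq_norm, Complex.normSq_apply, coe_re, coe_im]; ring
  obtain ⟨A, hA⟩ : ∃ a : ℝ, a = z.re^2+z.im^2+R^2 := ⟨_, rfl⟩
  have hApos : 0 < A := by rw [hA]; positivity
  have hAne : A ≠ 0 := hApos.ne'
  obtain ⟨S, hSdef⟩ : ∃ s : ℝ, s = Real.sqrt (A^2 - 4*R^2*z.re^2) := ⟨_, rfl⟩
  have hS2 : S^2 = A^2 - 4*R^2*z.re^2 := by
    rw [hSdef]
    exact Real.sq_sqrt (by nlinarith [sq_nonneg (z.re^2+z.im^2-R^2), sq_nonneg (R*z.im)])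
  have hSpos : 0 < S := by
    rw [hSdef]
    have h9 : 0 < A^2 - 4*R^2*z.re^2 := by
      nlinarith [sq_nonneg (z.re^2+z.im^2-R^2), mul_pos hR hY, sq_nonneg (R*z.im)]
    exact Real.sqrt_pos.2 h9
  have hS2RY : 2*R*z.im ≤ S := by
    have h9 : 0 ≤ A^2 - 4*R^2*z.re^2 := by
      nlinarith [sq_nonneg (z.re^2+z.im^2-R^2), sq_nonneg (R*z.im)]
    rw [hSdef, Real.le_sqrt (by positivity) h9]
    nlinarith [sq_nonneg (z.re^2+z.im^2-R^2)]
  have hb0 : (0:ℝ) < R*S/A := by positivity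
  obtain ⟨u₀, hu0re, hu0imc⟩ :
      ∃ u : ℍ, (u:ℂ).re = 2*R^2*z.re/A ∧ (u:ℂ).im = R*S/A := ⟨⟨⟨_, _⟩, hb0⟩, rfl, rfl⟩
  have hu0im : u₀.im = R*S/A := hu0imc
  have hu0mem : u₀ ∈ ell R := by
    show ‖(u₀:ℂ)‖ = R
    rw [Complex.norm_def, Complex.normSq_apply, hu0re, hu0imc,
      show 2*R^2*z.re/A*(2*R^2*z.re/A) + R*S/A*(R*S/A) = R^2 by
        field_simp
        linear_combination hS2]
    exact Real.sqrt_sq hR.le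
  have hn1 : Complex.normSq ((z:ℂ) - u₀) = S*(S-2*R*z.im)/A := by
    rw [Complex.normSq_apply, Complex.sub_re, Complex.sub_im, coe_re, coe_im, hu0re, hu0imc]
    field_simp
    linear_combination (R^2 - A)*hS2 - A^2*hA
  have hinf : Metric.infDist z (ell R) = dist z u₀ := by
    refine le_antisymm (Metric.infDist_le_dist_of_mem hu0mem) (le_infDist' ⟨u₀, hu0mem⟩ ?_)
    intro u hu
    have hb : 0 < u.im := u.im_pos
    have hab : u.re^2 + u.im^2 = R^2 := by
      have h2 : Complex.normSq (u:ℂ) = R^2 := by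
        rw [← Complex.sq_norm]
        rw [show ‖(u:ℂ)‖ = R from hu]
      rw [Complex.normSq_apply, coe_re, coe_im] at h2
      linear_combination h2
    rw [UpperHalfPlane.dist_eq, UpperHalfPlane.dist_eq]
    refine mul_le_mul_of_nonneg_left (Real.arsinh_le_arsinh.2 ?_) (by norm_num)
    rw [half_dist_eq_sqrt, half_dist_eq_sqrt]
    apply Real.sqrt_le_sqrt
    have hnormSqU : Complex.normSq ((z:ℂ) - u) = (z.re-u.re)^2 + (z.im-u.im)^2 := by
      rw [Complex.normSq_apply, Complex.sub_re, Complex.sub_im, coe_re, coe_im, coe_re, coe_im]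
      ring
    rw [hn1, hnormSqU, hu0im]
    have key : u.im*S ≤ R*(A - 2*u.re*z.re) := by
      have hpos : 0 < A - 2*u.re*z.re := by nlinarith [sq_nonneg (z.re-u.re), hb, hY, hab, sq_nonneg u.im, sq_nonneg z.im]
      have hsq : (u.im*S)^2 ≤ (R*(A-2*u.re*z.re))^2 := by
        nlinarith [sq_nonneg (u.re*A - 2*R^2*z.re), hS2, hab, sq_nonneg S]
      nlinarith [hsq, hpos, mul_nonneg hb.le hSpos.le, mul_pos hR hpos]
    rw [div_le_div_iff₀ (by positivity) (by positivity)]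
    calc S*(S-2*R*z.im)/A * (4*(z.im*u.im)) = S*(S-2*R*z.im)*(4*(z.im*u.im))/A := by ring
      _ ≤ ((z.re-u.re)^2+(z.im-u.im)^2)*(4*(z.im*(R*S)))/A := by
          rw [div_le_div_iff_of_pos_right hApos]
          have expand : ((z.re-u.re)^2+(z.im-u.im)^2) = A - 2*u.re*z.re - 2*u.im*z.im := by
            linear_combination hab - hA
          rw [expand]
          nlinarith [mul_le_mul_of_nonneg_left key (by positivity : (0:ℝ) ≤ 4*z.im*S)]
      _ = ((z.re-u.re)^2+(z.im-u.im)^2)*(4*(z.im*(R*S/A))) := by ring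
  have hn2 : Complex.normSq ((z:ℂ) - (starRingEnd ℂ) (u₀:ℂ)) = S*(S+2*R*z.im)/A := by
    rw [Complex.normSq_apply, Complex.sub_re, Complex.sub_im, coe_re, coe_im,
      Complex.conj_re, Complex.conj_im, hu0re, hu0imc]
    field_simp
    linear_combination (R^2 - A)*hS2 - A^2*hA
  have habs : ‖(z:ℂ)-u₀‖ * ‖(z:ℂ) - (starRingEnd ℂ) (u₀:ℂ)‖
      = S*|z.re^2+z.im^2-R^2|/A := by
    rw [Complex.norm_def, Complex.norm_def, ← Real.sqrt_mul (normSq_nonneg _), hn1, hn2,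
      show S*(S-2*R*z.im)/A*(S*(S+2*R*z.im)/A) = (S*|z.re^2+z.im^2-R^2|/A)^2 by
        rw [show (S*|z.re^2+z.im^2-R^2|/A)^2 = S^2*(z.re^2+z.im^2-R^2)^2/(A*A) by
            rw [div_pow, mul_pow, _root_.sq_abs]; ring, div_mul_div_comm,
          div_eq_div_iff (by positivity) (by positivity)]
        linear_combination (A*A*S^2)*hS2 + (A*A*S^2*(A+z.re^2+z.im^2+R^2))*hA]
    exact Real.sqrt_sq (by positivity)
  rw [hinf, sinh_dist_eq, habs, hu0im, hzabs]
  rw [show z.re^2+z.im^2 - R^2 = z.re^2+z.im^2 - R^2 from rfl]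
  field_simp

lemma lemB (z : ℍ) :
    Real.sinh (dist z UpperHalfPlane.I) =
      (Real.sqrt 209 / 21) * Real.sinh (Metric.infDist z (ell (Real.sqrt (11 / 19)))) ↔
    20 * z.re ^ 4 + 40 * z.re ^ 2 * z.im ^ 2 + 325 * z.re ^ 2 + 20 * z.im ^ 4
        - 116 * z.im ^ 2 + 80 = 0 := by
  have hY : 0 < z.im := z.im_pos
  have hr : (0:ℝ) < Real.sqrt (11/19) := by positivity
  have hr2 : Real.sqrt (11/19)^2 = 11/19 := Real.sq_sqrt (by norm_num)
  have hzabs : ‖(z:ℂ)‖^2 = z.re^2+z.im^2 := by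
    rw [Complex.sq_norm, Complex.normSq_apply, coe_re, coe_im]; ring
  have hsqrt209 : Real.sqrt 209 = 19 * Real.sqrt (11/19) := by
    rw [show (209:ℝ) = 19^2*(11/19) by norm_num, Real.sqrt_mul (by positivity),
      Real.sqrt_sq (by norm_num)]
  rw [sinh_dist_eq, sinh_infDist_ell hr, hzabs, hr2]
  have hIc : (UpperHalfPlane.I : ℂ) = Complex.I := rfl
  have hIim : UpperHalfPlane.I.im = 1 := rfl
  rw [hIc, hIim, Complex.conj_I]
  have h1 : ‖(z:ℂ) - Complex.I‖ = Real.sqrt (z.re^2+(z.im-1)^2) := by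
    rw [Complex.norm_def]
    congr 1
    rw [Complex.normSq_apply, Complex.sub_re, Complex.sub_im, coe_re, coe_im, Complex.I_re,
      Complex.I_im]
    ring
  have h2 : ‖(z:ℂ) - -Complex.I‖ = Real.sqrt (z.re^2+(z.im+1)^2) := by
    rw [Complex.norm_def]
    congr 1
    rw [Complex.normSq_apply, Complex.sub_re, Complex.sub_im, Complex.neg_re, Complex.neg_im,
      coe_re, coe_im, Complex.I_re, Complex.I_im]
    ring
  rw [h1, h2, ← Real.sqrt_mul (by positivity)]
  have habs19 : |z.re^2+z.im^2 - 11/19| = |19*(z.re^2+z.im^2)-11|/19 := by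
    rw [show z.re^2+z.im^2-11/19 = (19*(z.re^2+z.im^2)-11)/19 by ring, abs_div]
    norm_num
  rw [habs19, hsqrt209]
  have hP0 : (0:ℝ) ≤ (z.re^2+(z.im-1)^2)*(z.re^2+(z.im+1)^2) := by positivity
  obtain ⟨W, hWdef⟩ : ∃ w, w = Real.sqrt ((z.re^2+(z.im-1)^2)*(z.re^2+(z.im+1)^2)) := ⟨_, rfl⟩
  have hW0 : 0 ≤ W := hWdef ▸ Real.sqrt_nonneg _
  have hW2 : W^2 = (z.re^2+(z.im-1)^2)*(z.re^2+(z.im+1)^2) := by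
    rw [hWdef]; exact Real.sq_sqrt hP0
  obtain ⟨V, hVdef⟩ : ∃ v, v = |19*(z.re^2+z.im^2)-11| := ⟨_, rfl⟩
  have hV0 : 0 ≤ V := hVdef ▸ abs_nonneg _
  have hV2 : V^2 = (19*(z.re^2+z.im^2)-11)^2 := by rw [hVdef]; exact _root_.sq_abs _
  obtain ⟨r, hrdef⟩ : ∃ r, r = Real.sqrt (11/19) := ⟨_, rfl⟩
  have hr0 : 0 < r := hrdef ▸ hr
  rw [← hWdef, ← hVdef, ← hrdef]
  have hiff2 : (W/(2*z.im*1) = 19*r/21*(V/19/(2*r*z.im))) ↔ 21*W = V := by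
    constructor
    · intro hh
      field_simp at hh
      have h3 : (21*W) * (38*(r*z.im)) = V * (38*(r*z.im)) := by linear_combination (38*(r*z.im))*hh
      exact mul_right_cancel₀ (by positivity) h3
    · intro hh
      field_simp
      linear_combination hh
  rw [hiff2]
  constructor
  · intro h
    have hsq := congrArg (· ^ 2) h
    simp only [mul_pow] at hsq
    linear_combination hsq / 4 - (441/4)*hW2 + (1/4)*hV2
  · intro h
    have hW2' : W^2 = (V/21)^2 := by
      linear_combination hW2 - (1/441)*hV2 + (4/441) * h
    have hWV : W = V/21 := by
      rw [← Real.sqrt_sq hW0, hW2', Real.sqrt_sq (by positivity)]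
    rw [hWV]
    ring

set_option maxHeartbeats 1000000 in
lemma lemA (z : ℍ) :
    dist z UpperHalfPlane.I + dist z (vpt 2 (by norm_num)) = Real.log (5 / 2) ↔
    20 * z.re ^ 4 + 40 * z.re ^ 2 * z.im ^ 2 + 325 * z.re ^ 2 + 20 * z.im ^ 4
        - 116 * z.im ^ 2 + 80 = 0 := by
  have hY : 0 < z.im := z.im_pos
  have hlog : Real.cosh (Real.log (5/2)) = 29/20 := by
    rw [Real.cosh_eq, Real.exp_log (by norm_num), Real.exp_neg, Real.exp_log (by norm_num)]
    norm_num
  have h0 : dist z UpperHalfPlane.I + dist z (vpt 2 (by norm_num)) = Real.log (5 / 2) ↔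
      Real.cosh (dist z UpperHalfPlane.I + dist z (vpt 2 (by norm_num))) = 29/20 := by
    constructor
    · intro h; rw [h, hlog]
    · intro h
      refine Real.cosh_strictMonoOn.injOn ?_ ?_ (by rw [h, hlog])
      · exact Set.mem_Ici.2 (add_nonneg dist_nonneg dist_nonneg)
      · exact Set.mem_Ici.2 (Real.log_nonneg (by norm_num))
  rw [h0, Real.cosh_add]
  -- coordinate facts
  have hIc : (UpperHalfPlane.I : ℂ) = Complex.I := rfl
  have hIim : UpperHalfPlane.I.im = 1 := rfl
  have hvc : ((vpt 2 (by norm_num) : ℍ) : ℂ) = (2:ℝ) * Complex.I := rfl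
  have hvim : (vpt 2 (by norm_num) : ℍ).im = 2 := by
    simp [vpt, UpperHalfPlane.mk_im]
  have hc1 : Real.cosh (dist z UpperHalfPlane.I) = (z.re^2+z.im^2+1)/(2*z.im) := by
    rw [UpperHalfPlane.cosh_dist, Complex.dist_eq, Complex.sq_norm, hIc, hIim,
      show Complex.normSq ((z:ℂ) - Complex.I) = z.re^2+(z.im-1)^2 by
        rw [Complex.normSq_apply, Complex.sub_re, Complex.sub_im, coe_re, coe_im,
          Complex.I_re, Complex.I_im]
        ring]
    field_simp
    ring
  have hc2 : Real.cosh (dist z (vpt 2 (by norm_num))) = (z.re^2+z.im^2+4)/(4*z.im) := by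
    rw [UpperHalfPlane.cosh_dist, Complex.dist_eq, Complex.sq_norm, hvc, hvim,
      show Complex.normSq ((z:ℂ) - (2:ℝ)*Complex.I) = z.re^2+(z.im-2)^2 by
        rw [Complex.normSq_apply]
        simp [Complex.sub_re, Complex.sub_im, coe_re, coe_im]
        ring]
    field_simp
    ring
  have hs1 : Real.sinh (dist z UpperHalfPlane.I)
      = Real.sqrt ((z.re^2+(z.im-1)^2) * (z.re^2+(z.im+1)^2))/(2*z.im) := by
    rw [sinh_dist_eq, hIc, hIim, Complex.conj_I,
      show ‖(z:ℂ) - Complex.I‖ = Real.sqrt (z.re^2+(z.im-1)^2) by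
        rw [Complex.norm_def]
        congr 1
        rw [Complex.normSq_apply, Complex.sub_re, Complex.sub_im, coe_re, coe_im,
          Complex.I_re, Complex.I_im]
        ring,
      show ‖(z:ℂ) - -Complex.I‖ = Real.sqrt (z.re^2+(z.im+1)^2) by
        rw [Complex.norm_def]
        congr 1
        rw [Complex.normSq_apply, Complex.sub_re, Complex.sub_im, Complex.neg_re,
          Complex.neg_im, coe_re, coe_im, Complex.I_re, Complex.I_im]
        ring,
      ← Real.sqrt_mul (by positivity)]
    ring
  have hs2 : Real.sinh (dist z (vpt 2 (by norm_num)))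
      = Real.sqrt ((z.re^2+(z.im-2)^2) * (z.re^2+(z.im+2)^2))/(4*z.im) := by
    rw [sinh_dist_eq, hvc, hvim,
      show (starRingEnd ℂ) ((2:ℝ)*Complex.I) = -((2:ℝ)*Complex.I) by
        rw [map_mul, Complex.conj_ofReal, Complex.conj_I]; ring,
      show ‖(z:ℂ) - (2:ℝ)*Complex.I‖ = Real.sqrt (z.re^2+(z.im-2)^2) by
        rw [Complex.norm_def]
        congr 1
        rw [Complex.normSq_apply]
        simp [Complex.sub_re, Complex.sub_im, coe_re, coe_im]
        ring,
      show ‖(z:ℂ) - -((2:ℝ)*Complex.I)‖ = Real.sqrt (z.re^2+(z.im+2)^2) by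
        rw [Complex.norm_def]
        congr 1
        rw [Complex.normSq_apply]
        simp [Complex.sub_re, Complex.sub_im, coe_re, coe_im]
        ring,
      ← Real.sqrt_mul (by positivity)]
    ring
  rw [hc1, hc2, hs1, hs2]
  have hM0 : (0:ℝ) ≤ ((z.re^2+(z.im-1)^2) * (z.re^2+(z.im+1)^2))
      * ((z.re^2+(z.im-2)^2) * (z.re^2+(z.im+2)^2)) := by positivity
  obtain ⟨W, hWdef⟩ : ∃ w, w = Real.sqrt (((z.re^2+(z.im-1)^2) * (z.re^2+(z.im+1)^2))
      * ((z.re^2+(z.im-2)^2) * (z.re^2+(z.im+2)^2))) := ⟨_, rfl⟩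
  have hW0 : 0 ≤ W := hWdef ▸ Real.sqrt_nonneg _
  have hW2 : W^2 = ((z.re^2+(z.im-1)^2) * (z.re^2+(z.im+1)^2))
      * ((z.re^2+(z.im-2)^2) * (z.re^2+(z.im+2)^2)) := by
    rw [hWdef]; exact Real.sq_sqrt hM0
  have hWmul : Real.sqrt ((z.re^2+(z.im-1)^2) * (z.re^2+(z.im+1)^2))
      * Real.sqrt ((z.re^2+(z.im-2)^2) * (z.re^2+(z.im+2)^2)) = W := by
    rw [hWdef, ← Real.sqrt_mul (by positivity)]
  have hiff2 : ((z.re^2+z.im^2+1)/(2*z.im) * ((z.re^2+z.im^2+4)/(4*z.im))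
      + Real.sqrt ((z.re^2+(z.im-1)^2) * (z.re^2+(z.im+1)^2))/(2*z.im)
      * (Real.sqrt ((z.re^2+(z.im-2)^2) * (z.re^2+(z.im+2)^2))/(4*z.im)) = 29/20) ↔
      W = 58/5*z.im^2 - (z.re^2+z.im^2+1)*(z.re^2+z.im^2+4) := by
    rw [div_mul_div_comm, div_mul_div_comm, hWmul]
    constructor
    · intro hh
      field_simp at hh
      linarith
    · intro hh
      rw [hh]
      field_simp
      ring
  rw [hiff2]
  constructor
  · intro h
    have hT0 : 0 ≤ 58/5*z.im^2 - (z.re^2+z.im^2+1)*(z.re^2+z.im^2+4) := h ▸ hW0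
    have hsq := congrArg (· ^ 2) h
    -- hsq : W^2 = T^2 ; W^2 = M ; M - T^2 = (4/25) z.im^2 * quartic
    have hq : (4/25*z.im^2) * (20 * z.re ^ 4 + 40 * z.re ^ 2 * z.im ^ 2 + 325 * z.re ^ 2
        + 20 * z.im ^ 4 - 116 * z.im ^ 2 + 80) = 0 := by
      linear_combination hsq - hW2
    have h2 := mul_eq_zero.1 hq
    rcases h2 with h2 | h2
    · exact absurd h2 (by positivity)
    · exact h2
  · intro h
    have h441 : 441*z.im^2 = 20*(z.re^2+z.im^2)^2 + 325*(z.re^2+z.im^2) + 80 := by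
      linear_combination -h
    have hs5 : 20*(z.re^2+z.im^2)^2 - 116*(z.re^2+z.im^2) + 80 ≤ 0 := by
      nlinarith [sq_nonneg z.re, sq_nonneg z.im, h441]
    have hT0 : 0 ≤ 58/5*z.im^2 - (z.re^2+z.im^2+1)*(z.re^2+z.im^2+4) := by
      nlinarith [hs5, h441, sq_nonneg z.re, sq_nonneg z.im]
    have hW2' : W^2 = (58/5*z.im^2 - (z.re^2+z.im^2+1)*(z.re^2+z.im^2+4))^2 := by
      linear_combination hW2 + (4/25*z.im^2) * h
    rw [← Real.sqrt_sq hW0, hW2', Real.sqrt_sq hT0]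

/-- The two-focus ellipse with foci `i`, `2i` and distance-sum `log(5/2)` equals the
focus/directrix ellipse with `ε = √209/21`, `r = √(11/19)`, and both equal the quartic
curve `20x⁴ + 40x²y² + 325x² + 20y⁴ − 116y² + 80 = 0`. -/
theorem stmt11 :
    {z : ℍ | dist z UpperHalfPlane.I + dist z (vpt 2 (by norm_num)) = Real.log (5 / 2)} =
      {z : ℍ | Real.sinh (dist z UpperHalfPlane.I) =
        (Real.sqrt 209 / 21) * Real.sinh (Metric.infDist z (ell (Real.sqrt (11 / 19))))} ∧
    {z : ℍ | Real.sinh (dist z UpperHalfPlane.I) =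
        (Real.sqrt 209 / 21) * Real.sinh (Metric.infDist z (ell (Real.sqrt (11 / 19))))} =
      {z : ℍ | 20 * z.re ^ 4 + 40 * z.re ^ 2 * z.im ^ 2 + 325 * z.re ^ 2 + 20 * z.im ^ 4
        - 116 * z.im ^ 2 + 80 = 0} := by
  constructor
  · exact Set.ext fun z => (lemA z).trans (lemB z).symm
  · exact Set.ext fun z => lemB z
end
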